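/- With notation as above, the polynomial \overline{W}_L(t) = Σᵢ (Wᵢ(t) − t^{span_{Kᵢ}} Wᵢ(t^{-1})) is invariant under a crossing change at any chord of L, where Wᵢ(t) = Σ_{c self-chord of Kᵢ, Ind(c) ≠ 0} ω(c) t^{Ind'(c)}. -/

import Mathlib

open Finset LaurentPolynomial

/-- `W̄_L(t) = Σᵢ (Wᵢ(t) − t^{span_{Kᵢ}} Wᵢ(t⁻¹))` is invariant under a
crossing change at any chord `c₀`.  Chords `C` carry a component `comp`, a self/linking
flag `isSelf`, writhe `ω`, indices `Ind` (within the component) and `Ind'`.  The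
crossing change fixes all data at chords `≠ c₀` and all spans; if `c₀` is a self-chord
it sends `ω c₀ ↦ -ω c₀`, `Ind c₀ ↦ -Ind c₀`, `Ind' c₀ ↦ span (comp c₀) - Ind' c₀`;
if `c₀` is a linking chord all self-chord data is unchanged.  Here
`W̄_L = ∑_{c self, Ind c ≠ 0} ω c • (t^{Ind' c} - t^{span(comp c) - Ind' c})`. -/
theorem writheBar_link_crossing_change_invariant {C ι : Type} [Fintype C] [DecidableEq C]
    (isSelf : C → Prop) [DecidablePred isSelf] (comp : C → ι) (span : ι → ℤ)
    (ω Ind Ind' ω₂ Ind₂ Ind'₂ : C → ℤ) (c₀ : C)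
    (hother : ∀ a : C, a ≠ c₀ → ω₂ a = ω a ∧ Ind₂ a = Ind a ∧ Ind'₂ a = Ind' a)
    (hself : isSelf c₀ → ω₂ c₀ = - ω c₀ ∧ Ind₂ c₀ = - Ind c₀ ∧
      Ind'₂ c₀ = span (comp c₀) - Ind' c₀)
    (hlink : ¬ isSelf c₀ → ω₂ c₀ = ω c₀ ∧ Ind₂ c₀ = Ind c₀ ∧ Ind'₂ c₀ = Ind' c₀) :
    (∑ c ∈ univ.filter (fun c => isSelf c ∧ Ind c ≠ 0),
        ω c • (T (Ind' c) - T (span (comp c) - Ind' c)) : LaurentPolynomial ℤ) =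
      ∑ c ∈ univ.filter (fun c => isSelf c ∧ Ind₂ c ≠ 0),
        ω₂ c • (T (Ind'₂ c) - T (span (comp c) - Ind'₂ c)) := by
  have hfilter : univ.filter (fun c : C => isSelf c ∧ Ind c ≠ 0) =
      univ.filter (fun c => isSelf c ∧ Ind₂ c ≠ 0) := by
    apply Finset.filter_congr
    intro a _
    by_cases h : a = c₀
    · subst h
      by_cases hs : isSelf a
      · obtain ⟨-, h2, -⟩ := hself hs
        simp [h2, hs, neg_eq_zero]
      · simp [hs]
    · rw [(hother a h).2.1]
  rw [← hfilter]
  apply Finset.sum_congr rfl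
  intro a ha
  simp only [mem_filter] at ha
  by_cases h : a = c₀
  · subst h
    obtain ⟨h1, h2, h3⟩ := hself ha.2.1
    rw [h1, h3, sub_sub_cancel, neg_smul, ← smul_neg, neg_sub]
  · obtain ⟨h1, -, h3⟩ := hother a h
    rw [h1, h3]
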